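/- Let g be differentiable, L_g-smooth and μ_g-strongly convex, f convex differentiable L_f-smooth, K linear, and (x⋆, y⋆, z⋆) satisfying 0 = ∇g(x⋆) + K*y⋆ + ∇f(z⋆), z⋆ = x⋆. If x^{k+1} = prox_{η_x g}(x^k - η_x K*y^k - η_x ∇f(z^k)), then (1/(2η_x))‖x^{k+1} - x⋆‖² ≤ (1/(2η_x))‖x^k - x⋆‖² - (μ_g/2)‖x^{k+1} - x⋆‖² - (1/(2L_g))‖∇g(x^{k+1}) - ∇g(x⋆)‖² - (1/(2η_x))‖x^{k+1} - x^k‖² - ⟨K*(y^k - y⋆), x^k - x⋆⟩ - ⟨K*(y^k - y⋆), x^{k+1} - x^k⟩ - ⟨∇f(z^k) - ∇f(z⋆), x^k - x⋆⟩ - ⟨∇f(z^k) - ∇f(z⋆), x^{k+1} - x^k⟩. -/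

import Mathlib

open RealInnerProductSpace

abbrev Euc (d : ℕ) := EuclideanSpace ℝ (Fin d)

/-- `w = prox_{η g}(v)` for a real-valued `g`. -/
def IsProxR {d : ℕ} (η : ℝ) (g : Euc d → ℝ) (v w : Euc d) : Prop :=
  ∀ u, g w + ‖w - v‖ ^ 2 / (2 * η) ≤ g u + ‖u - v‖ ^ 2 / (2 * η)

set_option maxHeartbeats 1000000

lemma grad_quad_aux {d : ℕ} (η : ℝ) (v w : Euc d) :
    HasGradientAt (fun u : Euc d => ‖u - v‖ ^ 2 / (2 * η)) ((1/η) • (w - v)) w := by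
  rw [hasGradientAt_iff_hasFDerivAt]
  have h1 : HasFDerivAt (fun u : Euc d => u - v) (ContinuousLinearMap.id ℝ (Euc d)) w :=
    (hasFDerivAt_id w).sub_const v
  have h2 := (h1.inner ℝ h1).const_mul ((2*η)⁻¹)
  have h3 : (fun u : Euc d => ‖u - v‖ ^ 2 / (2 * η)) =
      fun u : Euc d => (2*η)⁻¹ * ⟪u - v, u - v⟫ := by
    funext u; rw [real_inner_self_eq_norm_sq]; ring
  rw [h3]
  refine h2.congr_fderiv ?_
  ext u
  simp only [InnerProductSpace.toDual_apply_apply, ContinuousLinearMap.smul_apply,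
    ContinuousLinearMap.coe_comp', Function.comp_apply, ContinuousLinearMap.prod_apply,
    ContinuousLinearMap.coe_id', id_eq, fderivInnerCLM_apply, real_inner_smul_left,
    smul_eq_mul]
  rw [real_inner_comm u (w - v)]
  ring

lemma prox_stationary_aux {d : ℕ} {η : ℝ} {g : Euc d → ℝ} {g' : Euc d → Euc d}
    (hgdiff : ∀ x, HasGradientAt g (g' x) x) {v w : Euc d} (hw : IsProxR η g v w) :
    g' w + (1/η) • (w - v) = 0 := by
  have hmin : IsLocalMin (fun u => g u + ‖u - v‖ ^ 2 / (2 * η)) w :=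
    Filter.Eventually.of_forall hw
  have hfd : HasFDerivAt (fun u => g u + ‖u - v‖ ^ 2 / (2 * η))
      (InnerProductSpace.toDual ℝ (Euc d) (g' w + (1/η) • (w - v))) w := by
    have := ((hgdiff w).hasFDerivAt).add (grad_quad_aux η v w).hasFDerivAt
    rwa [← map_add] at this
  have h0 := hmin.hasFDerivAt_eq_zero hfd
  have h0' : InnerProductSpace.toDual ℝ (Euc d) (g' w + (1/η) • (w - v)) =
      InnerProductSpace.toDual ℝ (Euc d) 0 := by rw [map_zero]; exact h0
  exact (InnerProductSpace.toDual ℝ (Euc d)).injective h0'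

lemma descent_lemma_aux {d : ℕ} {L : ℝ} {g : Euc d → ℝ} {g' : Euc d → Euc d}
    (hgdiff : ∀ x, HasGradientAt g (g' x) x)
    (hglip : ∀ x y, ‖g' x - g' y‖ ≤ L * ‖x - y‖) (x y : Euc d) :
    g y ≤ g x + ⟪g' x, y - x⟫ + L / 2 * ‖y - x‖ ^ 2 := by
  set φ : ℝ → ℝ := fun t =>
    g (x + t • (y - x)) - t * ⟪g' x, y - x⟫ - L * t ^ 2 / 2 * ‖y - x‖ ^ 2 with hφ
  have hd : ∀ t : ℝ, HasDerivAt φ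
      (⟪g' (x + t • (y - x)), y - x⟫ - ⟪g' x, y - x⟫ - L * t * ‖y - x‖ ^ 2) t := by
    intro t
    have hγ : HasDerivAt (fun t : ℝ => x + t • (y - x)) (y - x) t := by
      simpa using ((hasDerivAt_id t).smul_const (y - x)).const_add x
    have h1 : HasDerivAt (fun t : ℝ => g (x + t • (y - x)))
        ⟪g' (x + t • (y - x)), y - x⟫ t := by
      have := (hgdiff (x + t • (y - x))).hasFDerivAt.comp_hasDerivAt t hγ
      simpa [InnerProductSpace.toDual_apply_apply, Function.comp_def] using this
    have h2 : HasDerivAt (fun t : ℝ => t * ⟪g' x, y - x⟫) ⟪g' x, y - x⟫ t := by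
      simpa using (hasDerivAt_id t).mul_const (⟪g' x, y - x⟫ : ℝ)
    have h3 : HasDerivAt (fun t : ℝ => L * t ^ 2 / 2 * ‖y - x‖ ^ 2)
        (L * t * ‖y - x‖ ^ 2) t := by
      have := (((hasDerivAt_pow 2 t).const_mul L).div_const 2).mul_const (‖y - x‖ ^ 2)
      refine this.congr_deriv ?_
      rw [show (2:ℕ) - 1 = 1 from rfl]
      push_cast
      ring
    exact (h1.sub h2).sub h3
  have hmono : AntitoneOn φ (Set.Ici (0:ℝ)) := by
    apply antitoneOn_of_deriv_nonpos (convex_Ici 0)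
    · exact Continuous.continuousOn (by
        exact Continuous.sub (Continuous.sub
          (Continuous.comp (by
            have : Differentiable ℝ g := fun z => (hgdiff z).hasFDerivAt.differentiableAt
            exact this.continuous) (by continuity)) (by continuity)) (by continuity))
    · intro t ht
      exact (hd t).differentiableAt.differentiableWithinAt
    · intro t ht
      rw [interior_Ici] at ht
      rw [(hd t).deriv]
      have hle : ⟪g' (x + t • (y - x)) - g' x, y - x⟫ ≤ L * t * ‖y - x‖ ^ 2 := by
        calc ⟪g' (x + t • (y - x)) - g' x, y - x⟫ ≤ ‖g' (x + t • (y - x)) - g' x‖ * ‖y - x‖ :=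
              real_inner_le_norm _ _
          _ ≤ (L * ‖x + t • (y - x) - x‖) * ‖y - x‖ := by
              have := hglip (x + t • (y - x)) x
              nlinarith [norm_nonneg (y - x)]
          _ = L * t * ‖y - x‖ ^ 2 := by
              rw [show x + t • (y - x) - x = t • (y - x) by abel, norm_smul]
              simp [abs_of_pos (show (0:ℝ) < t from ht)]
              ring
      rw [inner_sub_left] at hle
      linarith
  have h01 := hmono (Set.mem_Ici.mpr le_rfl) (Set.mem_Ici.mpr zero_le_one) zero_le_one
  have hx1 : x + (1:ℝ) • (y - x) = y := by rw [one_smul]; abel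
  have e0 : φ 0 = g x := by
    simp only [hφ, zero_smul, add_zero, zero_mul, sub_zero, mul_zero, zero_div]
    norm_num
  have e1 : φ 1 = g y - ⟪g' x, y - x⟫ - L / 2 * ‖y - x‖ ^ 2 := by
    simp only [hφ, hx1, one_mul, one_pow, mul_one]
  rw [e0, e1] at h01
  linarith

lemma bregman_aux {d : ℕ} {L : ℝ} (hL : 0 < L) {g : Euc d → ℝ} {g' : Euc d → Euc d}
    (hgdiff : ∀ x, HasGradientAt g (g' x) x)
    (hglip : ∀ x y, ‖g' x - g' y‖ ≤ L * ‖x - y‖)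
    (hconv : ∀ x y, g y + ⟪g' y, x - y⟫ ≤ g x) (x y : Euc d) :
    1/(2*L) * ‖g' x - g' y‖ ^ 2 ≤ g x - g y - ⟪g' y, x - y⟫ := by
  set dd : Euc d := g' x - g' y with hdd
  set z : Euc d := x - (1/L) • dd with hz
  have h1 := descent_lemma_aux hgdiff hglip x z
  have h2 := hconv z y
  have hzx : z - x = -((1/L) • dd) := by rw [hz]; abel
  have e1 : ⟪g' x, z - x⟫ = -((1/L) * ⟪g' x, dd⟫) := by
    rw [hzx, inner_neg_right, real_inner_smul_right]
  have e2 : ‖z - x‖ ^ 2 = (1/L)^2 * ‖dd‖ ^ 2 := by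
    rw [hzx, norm_neg, norm_smul, Real.norm_eq_abs,
      abs_of_pos (show (0:ℝ) < 1/L by positivity)]
    ring
  have hzy : z - y = (x - y) - (1/L) • dd := by rw [hz]; abel
  have e3 : ⟪g' y, z - y⟫ = ⟪g' y, x - y⟫ - (1/L) * ⟪g' y, dd⟫ := by
    rw [hzy, inner_sub_right, real_inner_smul_right]
  have e4 : ⟪g' x, dd⟫ - ⟪g' y, dd⟫ = ‖dd‖ ^ 2 := by
    rw [← inner_sub_left, ← hdd, real_inner_self_eq_norm_sq]
  have hc : L / 2 * ((1/L)^2 * ‖dd‖ ^ 2) = 1/(2*L) * ‖dd‖ ^ 2 := by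
    field_simp
  have hd2 : (1/L) * ⟪g' x, dd⟫ - (1/L) * ⟪g' y, dd⟫ = (1/L) * ‖dd‖ ^ 2 := by
    rw [← mul_sub, e4]
  have hc2 : (1/L) * ‖dd‖ ^ 2 = 2 * (1/(2*L) * ‖dd‖ ^ 2) := by field_simp
  rw [e1, e2] at h1
  rw [e3] at h2
  linarith [h1, h2, hc, hd2, hc2]

/-- Descent lemma for the primal update of ACV-I when `g` is smooth
and strongly convex. -/
theorem acv1_primal_descent_smooth_g {dx dy : ℕ} (Lf Lg μg ηx : ℝ)
    (hLf : 0 < Lf) (hLg : 0 < Lg) (hμg : 0 ≤ μg) (hηx : 0 < ηx)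
    (K : Euc dx →L[ℝ] Euc dy)
    (f : Euc dx → ℝ) (f' : Euc dx → Euc dx)
    (hfconv : ConvexOn ℝ Set.univ f)
    (hfdiff : ∀ x, HasGradientAt f (f' x) x)
    (hflip : ∀ x y, ‖f' x - f' y‖ ≤ Lf * ‖x - y‖)
    (g : Euc dx → ℝ) (g' : Euc dx → Euc dx)
    (hgdiff : ∀ x, HasGradientAt g (g' x) x)
    (hglip : ∀ x y, ‖g' x - g' y‖ ≤ Lg * ‖x - y‖)
    (hgsc : ∀ x y : Euc dx,
      g y + ⟪g' y, x - y⟫ + (μg / 2) * ‖x - y‖ ^ 2 ≤ g x)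
    (xs zs : Euc dx) (ys : Euc dy) (hzx : zs = xs)
    (hopt : g' xs + (ContinuousLinearMap.adjoint K) ys + f' zs = 0)
    (xk xk1 zk : Euc dx) (yk : Euc dy)
    (hx : IsProxR ηx g
      (xk - ηx • (ContinuousLinearMap.adjoint K) yk - ηx • f' zk) xk1) :
    (1 / (2 * ηx)) * ‖xk1 - xs‖ ^ 2
      ≤ (1 / (2 * ηx)) * ‖xk - xs‖ ^ 2
        - (μg / 2) * ‖xk1 - xs‖ ^ 2
        - (1 / (2 * Lg)) * ‖g' xk1 - g' xs‖ ^ 2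
        - (1 / (2 * ηx)) * ‖xk1 - xk‖ ^ 2
        - ⟪(ContinuousLinearMap.adjoint K) (yk - ys), xk - xs⟫
        - ⟪(ContinuousLinearMap.adjoint K) (yk - ys), xk1 - xk⟫
        - ⟪f' zk - f' zs, xk - xs⟫
        - ⟪f' zk - f' zs, xk1 - xk⟫ := by
  set A : Euc dx := (ContinuousLinearMap.adjoint K) yk with hA
  set As : Euc dx := (ContinuousLinearMap.adjoint K) ys with hAs
  set B : Euc dx := f' zk with hB
  set Bs : Euc dx := f' zs with hBs
  set v : Euc dx := xk - ηx • A - ηx • B with hv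
  set w : Euc dx := xk1 - xs with hw
  -- convexity of g
  have hconv : ∀ x y, g y + ⟪g' y, x - y⟫ ≤ g x := by
    intro x y
    have h := hgsc x y
    have : 0 ≤ μg / 2 * ‖x - y‖ ^ 2 := by positivity
    linarith
  -- strong monotonicity + cocoercivity
  have hS : μg / 2 * ‖w‖ ^ 2 + 1/(2*Lg) * ‖g' xk1 - g' xs‖ ^ 2 ≤ ⟪g' xk1 - g' xs, w⟫ := by
    have m1 := hgsc xs xk1
    have m2 := hgsc xk1 xs
    have hn : ‖xs - xk1‖ = ‖w‖ := by rw [hw, norm_sub_rev]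
    have hi1 : ⟪g' xk1, xs - xk1⟫ = -⟪g' xk1, w⟫ := by
      rw [show xs - xk1 = -w by rw [hw]; abel, inner_neg_right]
    have b1 := bregman_aux hLg hgdiff hglip hconv xk1 xs
    have b2 := bregman_aux hLg hgdiff hglip hconv xs xk1
    have hn2 : ‖g' xs - g' xk1‖ = ‖g' xk1 - g' xs‖ := norm_sub_rev _ _
    rw [hn2] at b2
    rw [hi1] at m1
    rw [hn] at m1
    have hi2 : ⟪g' xk1, xs - xk1⟫ = -⟪g' xk1, w⟫ := by
      rw [show xs - xk1 = -w by rw [hw]; abel, inner_neg_right]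
    rw [hi2] at b2
    rw [← hw] at b1 m2
    rw [inner_sub_left]
    linarith
  -- stationarity of the prox
  have hst := prox_stationary_aux hgdiff hx
  have hveq : ηx • g' xk1 + (xk1 - v) = 0 := by
    have h5 : ηx • (g' xk1 + (1/ηx) • (xk1 - v)) = ηx • (0 : Euc dx) := by rw [hst]
    rw [smul_add, smul_smul, mul_one_div, div_self hηx.ne', one_smul, smul_zero] at h5
    exact h5
  -- scalar identities
  have I1 : ηx * ⟪g' xk1, w⟫ + (⟪xk1 - xk, w⟫ + ηx * ⟪A, w⟫ + ηx * ⟪B, w⟫) = 0 := by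
    have h6 := congrArg (fun z : Euc dx => ⟪z, w⟫) hveq
    simp only [inner_add_left, real_inner_smul_left, inner_zero_left] at h6
    have h7 : xk1 - v = (xk1 - xk) + ηx • A + ηx • B := by rw [hv]; abel
    rw [h7] at h6
    simp only [inner_add_left, real_inner_smul_left] at h6
    linarith
  have I2 : ⟪g' xs, w⟫ + ⟪As, w⟫ + ⟪Bs, w⟫ = 0 := by
    have h6 := congrArg (fun z : Euc dx => ⟪z, w⟫) hopt
    simp only [inner_add_left, inner_zero_left, ← hAs, ← hBs] at h6
    linarith
  have I3 : ‖xk - xs‖ ^ 2 = ‖w‖ ^ 2 - 2 * ⟪w, xk1 - xk⟫ + ‖xk1 - xk‖ ^ 2 := by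
    rw [show xk - xs = w - (xk1 - xk) by rw [hw]; abel, norm_sub_sq_real]
  have Icomm : ⟪w, xk1 - xk⟫ = ⟪xk1 - xk, w⟫ := real_inner_comm _ _
  have I4 : ⟪(ContinuousLinearMap.adjoint K) (yk - ys), xk - xs⟫
      + ⟪(ContinuousLinearMap.adjoint K) (yk - ys), xk1 - xk⟫ = ⟪A, w⟫ - ⟪As, w⟫ := by
    rw [← inner_add_right, show (xk - xs) + (xk1 - xk) = w by rw [hw]; abel, map_sub,
      inner_sub_left, ← hA, ← hAs]
  have I5 : ⟪B - Bs, xk - xs⟫ + ⟪B - Bs, xk1 - xk⟫ = ⟪B, w⟫ - ⟪Bs, w⟫ := by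
    rw [← inner_add_right, show (xk - xs) + (xk1 - xk) = w by rw [hw]; abel, inner_sub_left]
  have I6 : ⟪g' xk1 - g' xs, w⟫ = ⟪g' xk1, w⟫ - ⟪g' xs, w⟫ := inner_sub_left _ _ _
  have hkey : (1 / (2 * ηx)) * ‖xk - xs‖ ^ 2
        - (μg / 2) * ‖w‖ ^ 2
        - (1 / (2 * Lg)) * ‖g' xk1 - g' xs‖ ^ 2
        - (1 / (2 * ηx)) * ‖xk1 - xk‖ ^ 2
        - (⟪A, w⟫ - ⟪As, w⟫) - (⟪B, w⟫ - ⟪Bs, w⟫)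
        - (1 / (2 * ηx)) * ‖w‖ ^ 2
      = ⟪g' xk1 - g' xs, w⟫ - μg / 2 * ‖w‖ ^ 2 - 1/(2*Lg) * ‖g' xk1 - g' xs‖ ^ 2 := by
    rw [I6, I3, Icomm]
    have hinv : 2 * (1/(2*ηx)) * ηx = 1 := by field_simp
    linear_combination (-(2 * (1/(2*ηx)))) * I1 + I2
      + (⟪g' xk1, w⟫ + ⟪A, w⟫ + ⟪B, w⟫) * hinv
  linarith [hS, hkey, I4, I5]
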